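/- Let $r = \frac{1 + \sqrt{7}}{4} + i\,\frac{-1 + \sqrt{7}}{4}$, and let $z_1, z_2, z_3, z_4$ be Gaussian integers, not all zero, with $|z_1|^2 + |z_2|^2 = |z_3|^2 + |z_4|^2$. Define $D = r(|z_3|^2 + |z_4|^2) - i\overline{r}(|z_1|^2 + |z_2|^2) + (z_1\overline{z_3} + z_2\overline{z_4}) - i(\overline{z_1} z_3 + \overline{z_2} z_4)$. Then $|D|^2 \geq 1/2$. -/

import Mathlib

open Complex ComplexConjugate

/-- A Gaussian integer: a complex number whose real and imaginary parts are integers. -/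
def IsGaussianInt (z : ℂ) : Prop := ∃ a b : ℤ, z = (a : ℂ) + (b : ℂ) * Complex.I

/-- The optimized design coefficient `r = (1+√7)/4 + i(-1+√7)/4`. -/
noncomputable def rOpt : ℂ :=
  (((1 + Real.sqrt 7) / 4 : ℝ) : ℂ) + (((-1 + Real.sqrt 7) / 4 : ℝ) : ℂ) * Complex.I

lemma zmod2_key : ∀ a b c d e f g h : ZMod 2,
    a^2+b^2+c^2+d^2 = 0 → e^2+f^2+g^2+h^2 = 0 →
    a*e+b*f+c*g+d*h - (b*e-a*f+d*g-c*h) = 0 := by decide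

lemma zmod4_even : ∀ a b c d : ZMod 4, a^2+b^2+c^2+d^2 = 0 →
    (a+b)^2 = 0 ∧ (c+d)^2 = 0 := by decide

lemma key_lemma : ∀ n : ℕ, ∀ a b c d e f g h N : ℤ,
    a^2+b^2+c^2+d^2 = N → e^2+f^2+g^2+h^2 = N → N ≠ 0 → N.toNat = n →
    N + 2*(a*e+b*f+c*g+d*h - (b*e-a*f+d*g-c*h)) ≠ 0 := by
  intro n
  induction n using Nat.strong_induction_on with
  | _ n ih =>
    intro a b c d e f g h N h1 h2 hN hn ht
    have hNpos : 0 < N := lt_of_le_of_ne (h1 ▸ by positivity) (Ne.symm hN)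
    have hN2 : (2:ℤ) ∣ N := ⟨-(a*e+b*f+c*g+d*h - (b*e-a*f+d*g-c*h)), by linarith⟩
    have hs1 : ((a:ZMod 2)^2+(b:ZMod 2)^2+(c:ZMod 2)^2+(d:ZMod 2)^2) = 0 := by
      have : ((a^2+b^2+c^2+d^2 : ℤ) : ZMod 2) = 0 :=
        (ZMod.intCast_zmod_eq_zero_iff_dvd _ 2).mpr (h1 ▸ hN2)
      push_cast at this; exact this
    have hs2 : ((e:ZMod 2)^2+(f:ZMod 2)^2+(g:ZMod 2)^2+(h:ZMod 2)^2) = 0 := by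
      have : ((e^2+f^2+g^2+h^2 : ℤ) : ZMod 2) = 0 :=
        (ZMod.intCast_zmod_eq_zero_iff_dvd _ 2).mpr (h2 ▸ hN2)
      push_cast at this; exact this
    have hpq : (2:ℤ) ∣ (a*e+b*f+c*g+d*h - (b*e-a*f+d*g-c*h)) := by
      have h0 : ((a*e+b*f+c*g+d*h - (b*e-a*f+d*g-c*h) : ℤ) : ZMod 2) = 0 := by
        push_cast; exact zmod2_key a b c d e f g h hs1 hs2
      exact (ZMod.intCast_zmod_eq_zero_iff_dvd _ 2).mp h0
    obtain ⟨m, hm⟩ := hpq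
    have hN4 : (4:ℤ) ∣ N := ⟨-m, by rw [hm] at ht; linarith⟩
    have hz4 : ∀ x y z w : ℤ, x^2+y^2+z^2+w^2 = N → (2:ℤ) ∣ (x+y) ∧ (2:ℤ) ∣ (z+w) := by
      intro x y z w hxy
      have hcast : ((x:ZMod 4)^2+(y:ZMod 4)^2+(z:ZMod 4)^2+(w:ZMod 4)^2) = 0 := by
        have : ((x^2+y^2+z^2+w^2 : ℤ) : ZMod 4) = 0 :=
          (ZMod.intCast_zmod_eq_zero_iff_dvd _ 4).mpr (hxy ▸ hN4)
        push_cast at this; exact this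
      obtain ⟨hxy2, hzw2⟩ := zmod4_even x y z w hcast
      constructor
      · have hc : (((x+y)^2 : ℤ) : ZMod 4) = 0 := by push_cast; exact hxy2
        have hd4 : (4:ℤ) ∣ (x+y)^2 := (ZMod.intCast_zmod_eq_zero_iff_dvd _ 4).mp hc
        exact Int.Prime.dvd_pow' (by norm_num) (dvd_trans (by norm_num) hd4)
      · have hc : (((z+w)^2 : ℤ) : ZMod 4) = 0 := by push_cast; exact hzw2
        have hd4 : (4:ℤ) ∣ (z+w)^2 := (ZMod.intCast_zmod_eq_zero_iff_dvd _ 4).mp hc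
        exact Int.Prime.dvd_pow' (by norm_num) (dvd_trans (by norm_num) hd4)
    obtain ⟨hab, hcd⟩ := hz4 a b c d h1
    obtain ⟨hef, hgh⟩ := hz4 e f g h h2
    obtain ⟨k1, hk1⟩ := hab
    obtain ⟨k2, hk2⟩ := hcd
    obtain ⟨k3, hk3⟩ := hef
    obtain ⟨k4, hk4⟩ := hgh
    have hb : b = 2*k1 - a := by omega
    have hd : d = 2*k2 - c := by omega
    have hf : f = 2*k3 - e := by omega
    have hh : h = 2*k4 - g := by omega
    subst hb hd hf hh
    obtain ⟨M, hNM⟩ : ∃ M : ℤ, N = 2*M := by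
      obtain ⟨j, hj⟩ := hN4; exact ⟨2*j, by omega⟩
    have h1' : k1^2 + (k1-a)^2 + k2^2 + (k2-c)^2 = M := by
      have hd1 : 2*(k1^2 + (k1-a)^2 + k2^2 + (k2-c)^2) = N := by linear_combination h1
      linarith
    have h2' : k3^2 + (k3-e)^2 + k4^2 + (k4-g)^2 = M := by
      have hd2 : 2*(k3^2 + (k3-e)^2 + k4^2 + (k4-g)^2) = N := by linear_combination h2
      linarith
    have hM0 : M ≠ 0 := by omega
    have hlt : M.toNat < n := by omega
    apply ih M.toNat hlt k1 (k1-a) k2 (k2-c) k3 (k3-e) k4 (k4-g) M h1' h2' hM0 rfl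
    have h2t : 2 * (M + 2*(k1*k3 + (k1-a)*(k3-e) + k2*k4 + (k2-c)*(k4-g) -
        ((k1-a)*k3 - k1*(k3-e) + (k2-c)*k4 - k2*(k4-g)))) = 0 := by
      linear_combination ht - hNM
    linarith

lemma normSq_intPair (x y : ℤ) :
    Complex.normSq ((x:ℂ) + (y:ℂ)*Complex.I) = (x:ℝ)^2 + (y:ℝ)^2 := by
  have h : ((x:ℂ) + (y:ℂ)*Complex.I) = Complex.mk (x:ℝ) (y:ℝ) := by
    simp [Complex.ext_iff]
  rw [h, Complex.normSq_mk]; ring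

set_option maxHeartbeats 1000000 in
theorem stmt_11 (z₁ z₂ z₃ z₄ : ℂ)
    (h₁ : IsGaussianInt z₁) (h₂ : IsGaussianInt z₂)
    (h₃ : IsGaussianInt z₃) (h₄ : IsGaussianInt z₄)
    (hnz : ¬ (z₁ = 0 ∧ z₂ = 0 ∧ z₃ = 0 ∧ z₄ = 0))
    (heq : Complex.normSq z₁ + Complex.normSq z₂ = Complex.normSq z₃ + Complex.normSq z₄) :
    ‖(rOpt * ((Complex.normSq z₃ : ℂ) + (Complex.normSq z₄ : ℂ)) -
          Complex.I * conj rOpt * ((Complex.normSq z₁ : ℂ) + (Complex.normSq z₂ : ℂ)) +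
          (z₁ * conj z₃ + z₂ * conj z₄) -
          Complex.I * (conj z₁ * z₃ + conj z₂ * z₄))‖ ^ 2 ≥ 1 / 2 := by
  obtain ⟨a, b, rfl⟩ := h₁
  obtain ⟨c, d, rfl⟩ := h₂
  obtain ⟨e, f, rfl⟩ := h₃
  obtain ⟨g, h, rfl⟩ := h₄
  -- the integer norm equation
  have heqZ : a^2+b^2+c^2+d^2 = e^2+f^2+g^2+h^2 := by
    have := heq
    rw [normSq_intPair, normSq_intPair, normSq_intPair, normSq_intPair] at this
    have h' : a^2+b^2+(c^2+d^2) = e^2+f^2+(g^2+h^2) := by exact_mod_cast this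
    linarith
  -- the norm is nonzero
  have hN0 : a^2+b^2+c^2+d^2 ≠ 0 := by
    intro h0
    apply hnz
    have ha : a = 0 := by nlinarith [sq_nonneg a, sq_nonneg b, sq_nonneg c, sq_nonneg d]
    have hb : b = 0 := by nlinarith [sq_nonneg a, sq_nonneg b, sq_nonneg c, sq_nonneg d]
    have hc : c = 0 := by nlinarith [sq_nonneg a, sq_nonneg b, sq_nonneg c, sq_nonneg d]
    have hd : d = 0 := by nlinarith [sq_nonneg a, sq_nonneg b, sq_nonneg c, sq_nonneg d]
    have h0' : e^2+f^2+g^2+h^2 = 0 := by omega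
    have he : e = 0 := by nlinarith [sq_nonneg e, sq_nonneg f, sq_nonneg g, sq_nonneg h]
    have hf : f = 0 := by nlinarith [sq_nonneg e, sq_nonneg f, sq_nonneg g, sq_nonneg h]
    have hg : g = 0 := by nlinarith [sq_nonneg e, sq_nonneg f, sq_nonneg g, sq_nonneg h]
    have hh : h = 0 := by nlinarith [sq_nonneg e, sq_nonneg f, sq_nonneg g, sq_nonneg h]
    subst ha hb hc hd he hf hg hh
    norm_num
  -- the key integer is nonzero
  have ht : a^2+b^2+c^2+d^2 + 2*(a*e+b*f+c*g+d*h - (b*e-a*f+d*g-c*h)) ≠ 0 :=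
    key_lemma (a^2+b^2+c^2+d^2).toNat a b c d e f g h _ rfl heqZ.symm hN0 rfl
  -- identify the expression
  have heqC : ((Complex.normSq ((e:ℂ)+(f:ℂ)*Complex.I) : ℂ) + (Complex.normSq ((g:ℂ)+(h:ℂ)*Complex.I) : ℂ))
      = ((Complex.normSq ((a:ℂ)+(b:ℂ)*Complex.I) : ℂ) + (Complex.normSq ((c:ℂ)+(d:ℂ)*Complex.I) : ℂ)) := by
    exact_mod_cast congrArg (fun x : ℝ => (x:ℂ)) heq.symm
  have hD : (rOpt * ((Complex.normSq ((e:ℂ)+(f:ℂ)*Complex.I) : ℂ) + (Complex.normSq ((g:ℂ)+(h:ℂ)*Complex.I) : ℂ)) -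
      Complex.I * conj rOpt * ((Complex.normSq ((a:ℂ)+(b:ℂ)*Complex.I) : ℂ) + (Complex.normSq ((c:ℂ)+(d:ℂ)*Complex.I) : ℂ)) +
      (((a:ℂ)+(b:ℂ)*Complex.I) * conj ((e:ℂ)+(f:ℂ)*Complex.I) + ((c:ℂ)+(d:ℂ)*Complex.I) * conj ((g:ℂ)+(h:ℂ)*Complex.I)) -
      Complex.I * (conj ((a:ℂ)+(b:ℂ)*Complex.I) * ((e:ℂ)+(f:ℂ)*Complex.I) + conj ((c:ℂ)+(d:ℂ)*Complex.I) * ((g:ℂ)+(h:ℂ)*Complex.I)))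
      = ((((a^2+b^2+c^2+d^2 + 2*(a*e+b*f+c*g+d*h - (b*e-a*f+d*g-c*h)) : ℤ) : ℝ)/2 : ℝ) : ℂ) * (1 - Complex.I) := by
    have hr : rOpt - Complex.I * (conj rOpt) = (1/2 : ℂ) - (1/2 : ℂ) * Complex.I := by
      simp only [rOpt, map_add, map_mul, Complex.conj_ofReal, Complex.conj_I]
      push_cast; ring_nf; rw [Complex.I_sq]; ring
    rw [heqC]
    have hsplit : ∀ X S T : ℂ, rOpt * X - Complex.I * conj rOpt * X + S - Complex.I * T
        = (rOpt - Complex.I * conj rOpt) * X + (S - Complex.I * T) := by intros; ring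
    rw [hsplit, hr]
    have hn : ∀ x y : ℤ, (Complex.normSq ((x:ℂ)+(y:ℂ)*Complex.I) : ℂ) = (x:ℂ)^2 + (y:ℂ)^2 := by
      intro x y; rw [normSq_intPair]; push_cast; ring
    have hc : ∀ x y : ℤ, conj ((x:ℂ)+(y:ℂ)*Complex.I) = (x:ℂ) - (y:ℂ)*Complex.I := by
      intro x y; simp [Complex.ext_iff]
    rw [hn, hn, hc, hc, hc, hc]
    push_cast
    linear_combination ((Complex.I - 1) * ((b:ℂ)*f + d*h) + ((b:ℂ)*e - a*f + d*g - c*h)) * Complex.I_sq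
  rw [hD]
  set t : ℤ := a^2+b^2+c^2+d^2 + 2*(a*e+b*f+c*g+d*h - (b*e-a*f+d*g-c*h)) with htdef
  have habs : ‖(((t:ℝ)/2 : ℝ) : ℂ) * (1 - Complex.I)‖ ^ 2
      = ((t:ℝ)/2)^2 * 2 := by
    rw [Complex.sq_norm, Complex.normSq_mul, Complex.normSq_ofReal]
    have h2 : Complex.normSq (1 - Complex.I) = 2 := by
      simp [Complex.normSq_apply]; norm_num
    rw [h2]; ring
  rw [habs]
  have ht2 : (1:ℤ) ≤ t^2 := by rcases ht.lt_or_gt with h'|h' <;> nlinarith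
  have ht2' : (1:ℝ) ≤ (t:ℝ)^2 := by exact_mod_cast ht2
  nlinarith [ht2']
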